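/- Let α ∈ ℕⁿ be a nonzero multi-index. There exist constants C > 0 and ω > 0 (any ω < 1/(2|α|) works) such that for all ε ∈ (0,1], ∫_{{ r ∈ [0,1]ⁿ : r^{2α} ≥ ε }} ε / r^{2α} dr ≤ C·ε^ω, where r^{2α} = Π_j r_j^{2α_j}. -/

import Mathlib

open MeasureTheory Set

/-- For a nonzero multi-index `α ∈ ℕⁿ` and any `0 < ω < 1/(2|α|)` there is `C > 0`
such that `∫_{ r ∈ [0,1]ⁿ : r^{2α} ≥ ε } ε / r^{2α} dr ≤ C ε^ω` for all `ε ∈ (0,1]`. -/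
theorem stmt4 (n : ℕ) (α : Fin n → ℕ) (hα : α ≠ 0)
    (ω : ℝ) (hω0 : 0 < ω) (hω : ω < 1 / (2 * (∑ j, α j : ℝ))) :
    ∃ C : ℝ, 0 < C ∧ ∀ ε : ℝ, ε ∈ Ioc (0:ℝ) 1 →
      ∫ r in {r : Fin n → ℝ | (∀ j, r j ∈ Icc (0:ℝ) 1) ∧ ε ≤ ∏ j, r j ^ (2 * α j)},
          ε / ∏ j, r j ^ (2 * α j) ≤ C * ε ^ ω := by
  -- basic facts about the exponents
  obtain ⟨j₀, hj₀⟩ : ∃ j, α j ≠ 0 := Function.ne_iff.mp hα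
  have hS1 : (1:ℝ) ≤ ∑ j, (α j : ℝ) := by
    calc (1:ℝ) ≤ (α j₀ : ℝ) := by exact_mod_cast Nat.one_le_iff_ne_zero.mpr hj₀
    _ ≤ ∑ j, (α j : ℝ) := Finset.single_le_sum (f := fun i => (α i : ℝ)) (fun i _ => by positivity) (Finset.mem_univ j₀)
  set c : Fin n → ℝ := fun j => 2 * (α j : ℝ) * ω with hc
  have hc0 : ∀ j, 0 ≤ c j := fun j => by positivity
  have hc1 : ∀ j, c j < 1 := by
    intro j
    have h1 : (α j : ℝ) ≤ ∑ i, (α i : ℝ) :=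
      Finset.single_le_sum (f := fun i => (α i : ℝ)) (fun i _ => by positivity) (Finset.mem_univ j)
    have hSpos : (0:ℝ) < 2 * ∑ i, (α i : ℝ) := by linarith
    have hlt := (lt_div_iff₀ hSpos).mp hω
    calc c j = 2 * (α j : ℝ) * ω := rfl
    _ ≤ 2 * (∑ i, (α i : ℝ)) * ω := by nlinarith
    _ = ω * (2 * ∑ i, (α i : ℝ)) := by ring
    _ < 1 := hlt
  have hω1 : ω ≤ 1 := by
    have h2 : c j₀ < 1 := hc1 j₀
    have h1 : (1:ℝ) ≤ (α j₀ : ℝ) := by exact_mod_cast Nat.one_le_iff_ne_zero.mpr hj₀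
    have : c j₀ = 2 * (α j₀ : ℝ) * ω := rfl
    nlinarith
  refine ⟨∏ j, (1 - c j)⁻¹, Finset.prod_pos (fun j _ =>
    inv_pos.mpr (by linarith [hc1 j])), ?_⟩
  intro ε hε
  obtain ⟨hε0, hε1⟩ := hε
  -- names
  set P : (Fin n → ℝ) → ℝ := fun r => ∏ j, r j ^ (2 * α j) with hPdef
  set s : Set (Fin n → ℝ) :=
    {r : Fin n → ℝ | (∀ j, r j ∈ Icc (0:ℝ) 1) ∧ ε ≤ ∏ j, r j ^ (2 * α j)} with hsdef
  set box : Set (Fin n → ℝ) := Set.pi univ (fun _ => Icc (0:ℝ) 1) with hboxdef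
  have hsub : s ⊆ box := fun r hr j _ => hr.1 j
  have hboxm : MeasurableSet box := MeasurableSet.univ_pi (fun j => measurableSet_Icc)
  have hPmeas : Measurable P :=
    Finset.measurable_prod _ (fun j _ => (measurable_pi_apply j).pow_const _)
  have hsm : MeasurableSet s := by
    have h1 : s = {r : Fin n → ℝ | ∀ j, r j ∈ Icc (0:ℝ) 1} ∩ {r | ε ≤ P r} := rfl
    have h2 : {r : Fin n → ℝ | ∀ j, r j ∈ Icc (0:ℝ) 1} = box := by
      ext r
      constructor
      · intro hr i _; exact hr i
      · intro hr i; exact hr i (mem_univ i)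
    rw [h1, h2]
    exact hboxm.inter (measurableSet_le measurable_const hPmeas)
  -- the dominating function
  set g : (Fin n → ℝ) → ℝ := fun r => ∏ j, r j ^ (-(c j)) with hgdef
  set h : Fin n → ℝ → ℝ := fun j => (Icc (0:ℝ) 1).indicator (fun x => x ^ (-(c j))) with hhdef
  -- each h j is integrable with integral (1 - c j)⁻¹
  have hInt1 : ∀ j, IntegrableOn (fun x : ℝ => x ^ (-(c j))) (Icc (0:ℝ) 1) := by
    intro j
    rw [integrableOn_Icc_iff_integrableOn_Ioc]
    have := intervalIntegral.intervalIntegrable_rpow' (a := 0) (b := 1)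
      (r := -(c j)) (by linarith [hc1 j])
    rwa [intervalIntegrable_iff_integrableOn_Ioc_of_le zero_le_one] at this
  have hhint : ∀ j, Integrable (h j) := by
    intro j
    rw [hhdef]
    exact (integrable_indicator_iff measurableSet_Icc).mpr (hInt1 j)
  have hval : ∀ j, ∫ x, h j x = (1 - c j)⁻¹ := by
    intro j
    rw [hhdef]
    simp only
    rw [integral_indicator measurableSet_Icc, integral_Icc_eq_integral_Ioc,
      ← intervalIntegral.integral_of_le zero_le_one,
      integral_rpow (Or.inl (by linarith [hc1 j]))]
    rw [Real.one_rpow, Real.zero_rpow (by linarith [hc1 j])]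
    ring_nf
  -- identification with an indicator product
  have hind : box.indicator g = fun r => ∏ j, h j (r j) := by
    funext r
    by_cases hr : r ∈ box
    · rw [indicator_of_mem hr]
      refine Finset.prod_congr rfl (fun j _ => ?_)
      simp only [hhdef]
      exact (indicator_of_mem (hr j (mem_univ j)) (fun x => x ^ (-(c j)))).symm
    · rw [indicator_of_notMem hr]
      have : ∃ j, r j ∉ Icc (0:ℝ) 1 := by
        by_contra hcon
        push_neg at hcon
        exact hr (fun j _ => hcon j)
      obtain ⟨j, hj⟩ := this
      refine (Finset.prod_eq_zero (Finset.mem_univ j) ?_).symm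
      simp only [hhdef]
      exact indicator_of_notMem hj (fun x => x ^ (-(c j)))
  have hgint : IntegrableOn g box := by
    rw [← integrable_indicator_iff hboxm,
      show box.indicator g = fun r => ∏ j, h j (r j) from hind]
    exact Integrable.fintype_prod (fun j => hhint j)
  have hgval : ∫ r in box, g r = ∏ j, (1 - c j)⁻¹ := by
    rw [← integral_indicator hboxm,
      show box.indicator g = fun r => ∏ j, h j (r j) from hind,
      integral_fintype_prod_volume_eq_prod (ι := Fin n) h]
    exact Finset.prod_congr rfl (fun j _ => hval j)
  -- pointwise bound on s
  have hgP : ∀ r ∈ s, ε / P r ≤ ε ^ ω * g r := by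
    intro r hr
    have hrP : ε ≤ P r := hr.2
    have hP0 : 0 < P r := lt_of_lt_of_le hε0 hrP
    have hg_eq : g r = (P r) ^ (-ω) := by
      rw [hgdef, hPdef]
      simp only
      rw [← Real.finset_prod_rpow _ _ (fun j _ => pow_nonneg (hr.1 j).1 _) (-ω)]
      refine Finset.prod_congr rfl fun j _ => ?_
      rw [← Real.rpow_natCast (r j) (2 * α j), ← Real.rpow_mul (hr.1 j).1]
      congr 1
      push_cast
      ring
    have hx0 : 0 < ε / P r := div_pos hε0 hP0
    have hx1 : ε / P r ≤ 1 := (div_le_one hP0).mpr hrP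
    have key : ε / P r ≤ (ε / P r) ^ ω := by
      calc ε / P r = (ε / P r) ^ (1:ℝ) := (Real.rpow_one _).symm
      _ ≤ (ε / P r) ^ ω := Real.rpow_le_rpow_of_exponent_ge hx0 hx1 hω1
    rw [hg_eq, Real.rpow_neg hP0.le]
    calc ε / P r ≤ (ε / P r) ^ ω := key
    _ = ε ^ ω / (P r) ^ ω := Real.div_rpow hε0.le hP0.le _
    _ = ε ^ ω * ((P r) ^ ω)⁻¹ := div_eq_mul_inv _ _
  -- integrability of the integrand on s
  have hfint : IntegrableOn (fun r => ε / P r) s := by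
    have hboxvol : volume box = 1 := by
      rw [hboxdef, volume_pi_pi]
      simp [Real.volume_Icc]
    refine Measure.integrableOn_of_bounded (M := 1) ?_ ?_ ?_
    · exact ne_of_lt (lt_of_le_of_lt (measure_mono hsub)
        (by rw [hboxvol]; exact ENNReal.one_lt_top))
    · exact (measurable_const.div hPmeas).aestronglyMeasurable
    · rw [ae_restrict_iff' hsm]
      refine ae_of_all _ (fun r hr => ?_)
      have hP0 : 0 < P r := lt_of_lt_of_le hε0 hr.2
      rw [Real.norm_eq_abs, abs_of_nonneg (div_nonneg hε0.le hP0.le)]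
      exact (div_le_one hP0).mpr hr.2
  have hgints : IntegrableOn (fun r => ε ^ ω * g r) s :=
    ((hgint.mono_set hsub).const_mul _)
  -- put everything together
  calc ∫ r in s, ε / P r ≤ ∫ r in s, ε ^ ω * g r :=
        setIntegral_mono_on hfint hgints hsm hgP
  _ ≤ ∫ r in box, ε ^ ω * g r := by
      refine setIntegral_mono_set (hgint.const_mul _) ?_ hsub.eventuallyLE
      have hnn : ∀ᵐ r ∂(volume.restrict box), 0 ≤ ε ^ ω * g r := by
        rw [ae_restrict_iff' hboxm]
        refine ae_of_all _ (fun r hr => ?_)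
        have : 0 ≤ g r :=
          Finset.prod_nonneg (fun j _ => Real.rpow_nonneg (hr j (mem_univ j)).1 _)
        positivity
      exact hnn
  _ = ε ^ ω * ∫ r in box, g r := integral_const_mul _ _
  _ = ε ^ ω * ∏ j, (1 - c j)⁻¹ := by rw [hgval]
  _ = (∏ j, (1 - c j)⁻¹) * ε ^ ω := mul_comm _ _
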